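/- arXiv:1703.04555 — 4 statements merged into one kernel-verified Lean document; each statement's English description precedes it below -/
import Mathlib

section
/- If a bounded self-adjoint positive operator T on a Hilbert space satisfies ⟨T²ξ, ξ⟩ ≥ ε⟨Tξ, ξ⟩ for all ξ and some ε > 0, then the spectrum of T is contained in {0} ∪ [ε, ∞); in particular, on the orthogonal complement of the kernel of T, one has ⟨Tξ, ξ⟩ ≥ ε⟨ξ, ξ⟩. -/
open scoped InnerProductSpace

/-- If a bounded self-adjoint positive operator `T` on a complex Hilbert
space satisfies `⟨T²ξ, ξ⟩ ≥ ε⟨Tξ, ξ⟩` for all `ξ` and some `ε > 0`, then the spectrum of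
`T` is contained in `{0} ∪ [ε, ∞)`; in particular on the orthogonal complement of the
kernel of `T` one has `⟨Tξ, ξ⟩ ≥ ε⟨ξ, ξ⟩`. -/
theorem spectrum_subset_of_quadratic_gap
    {H : Type*} [NormedAddCommGroup H] [InnerProductSpace ℂ H] [CompleteSpace H]
    (T : H →L[ℂ] H) (hsa : IsSelfAdjoint T)
    (hpos : ∀ ξ : H, 0 ≤ (⟪T ξ, ξ⟫_ℂ).re)
    (ε : ℝ) (hε : 0 < ε)
    (hgap : ∀ ξ : H, ε * (⟪T ξ, ξ⟫_ℂ).re ≤ (⟪T (T ξ), ξ⟫_ℂ).re) :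
    spectrum ℝ T ⊆ {0} ∪ Set.Ici ε ∧
    ∀ ξ ∈ (LinearMap.ker (T : H →ₗ[ℂ] H))ᗮ, ε * ‖ξ‖ ^ 2 ≤ (⟪T ξ, ξ⟫_ℂ).re := by
  have hT : (0 : H →L[ℂ] H) ≤ T :=
    (ContinuousLinearMap.nonneg_iff_isPositive T).mpr ⟨hsa.isSymmetric, fun x => hpos x⟩
  -- S = T^2 - ε T is positive
  have hScfc : cfc (fun x : ℝ => x ^ 2 - ε * x) T = T ^ 2 - ε • T := by
    rw [cfc_sub _ _ T (by fun_prop) (by fun_prop), cfc_pow_id T 2, cfc_const_mul_id ε T]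
  have hS : (0 : H →L[ℂ] H) ≤ T ^ 2 - ε • T := by
    rw [ContinuousLinearMap.nonneg_iff_isPositive]
    refine ⟨by rw [← hScfc]; exact (cfc_predicate _ T : IsSelfAdjoint _).isSymmetric, fun x => ?_⟩
    have hx : (T ^ 2 - ε • T) x = T (T x) - ε • T x := by
      simp [pow_two, ContinuousLinearMap.mul_apply]
    rw [ContinuousLinearMap.reApplyInnerSelf_apply, hx, inner_sub_left,
      RCLike.real_smul_eq_coe_smul (K := ℂ), inner_smul_left, RCLike.conj_ofReal]
    simp only [map_sub, RCLike.re_ofReal_mul, RCLike.re_to_complex]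
    linarith [hgap x]
  have hspec : spectrum ℝ T ⊆ {0} ∪ Set.Ici ε := by
    intro μ hμ
    have hμ0 : 0 ≤ μ := spectrum_nonneg_of_nonneg hT hμ
    have hmem : μ ^ 2 - ε * μ ∈ spectrum ℝ (T ^ 2 - ε • T) := by
      rw [← hScfc, cfc_map_spectrum (fun x : ℝ => x ^ 2 - ε * x) T]
      exact ⟨μ, hμ, rfl⟩
    have h2 : 0 ≤ μ ^ 2 - ε * μ := spectrum_nonneg_of_nonneg hS hmem
    rcases eq_or_lt_of_le hμ0 with h | h
    · exact Or.inl h.symm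
    · right
      rw [Set.mem_Ici]
      nlinarith
  refine ⟨hspec, ?_⟩
  -- T^3 - ε T^2 is positive via cfc
  have hS3 : (0 : H →L[ℂ] H) ≤ T ^ 3 - ε • T ^ 2 := by
    have : cfc (fun x : ℝ => x ^ 3 - ε * x ^ 2) T = T ^ 3 - ε • T ^ 2 := by
      rw [cfc_sub _ _ T (by fun_prop) (by fun_prop), cfc_pow_id T 3, cfc_const_mul _ _ T,
        cfc_pow_id T 2]
    rw [← this]
    apply cfc_nonneg
    intro x hx
    rcases hspec hx with h | h
    · simp [Set.mem_singleton_iff.mp h]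
    · have hx0 : (0:ℝ) ≤ x := le_trans hε.le h
      nlinarith [Set.mem_Ici.mp h]
  -- hence ε‖Tη‖² ≤ re⟪T(Tη),Tη⟫ for all η
  have key : ∀ η : H, ε * ‖T η‖ ^ 2 ≤ (⟪T (T η), T η⟫_ℂ).re := by
    intro η
    have hp := ((ContinuousLinearMap.nonneg_iff_isPositive _).mp hS3).2 η
    have hx : (T ^ 3 - ε • T ^ 2) η = T (T (T η)) - ε • T (T η) := by
      simp [pow_succ, pow_two, ContinuousLinearMap.mul_apply]
    rw [ContinuousLinearMap.reApplyInnerSelf_apply, hx, inner_sub_left,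
      RCLike.real_smul_eq_coe_smul (K := ℂ), inner_smul_left, RCLike.conj_ofReal] at hp
    simp only [map_sub, RCLike.re_ofReal_mul, RCLike.re_to_complex] at hp
    have h1 : ⟪T (T (T η)), η⟫_ℂ = ⟪T (T η), T η⟫_ℂ := by
      rw [← ContinuousLinearMap.adjoint_inner_left T, hsa.adjoint_eq]
    have h2 : ⟪T (T η), η⟫_ℂ = ⟪T η, T η⟫_ℂ := by
      rw [← ContinuousLinearMap.adjoint_inner_left T, hsa.adjoint_eq]
    rw [h1, h2] at hp
    have hn : (⟪T η, T η⟫_ℂ).re = ‖T η‖ ^ 2 := @inner_self_eq_norm_sq ℂ _ _ _ _ (T η)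
    rw [hn] at hp
    linarith
  -- closed set argument
  intro ξ hξ
  have hker : LinearMap.ker (T : H →ₗ[ℂ] H) = (LinearMap.range (T : H →ₗ[ℂ] H))ᗮ := by
    ext x
    simp only [LinearMap.mem_ker, Submodule.mem_orthogonal]
    constructor
    · rintro hx _ ⟨y, rfl⟩
      rw [ContinuousLinearMap.coe_coe, ← ContinuousLinearMap.adjoint_inner_right T, hsa.adjoint_eq,
        show T x = 0 from hx, inner_zero_right]
    · intro h
      have h1 := h (T (T x)) ⟨T x, rfl⟩
      have h2 : ⟪T (T x), x⟫_ℂ = ⟪T x, T x⟫_ℂ := by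
        rw [← ContinuousLinearMap.adjoint_inner_left T, hsa.adjoint_eq]
      rw [h2] at h1
      exact inner_self_eq_zero.mp h1
  have hclos : ξ ∈ closure ((LinearMap.range (T : H →ₗ[ℂ] H) : Submodule ℂ H) : Set H) := by
    have : (LinearMap.ker (T : H →ₗ[ℂ] H))ᗮ = (LinearMap.range (T : H →ₗ[ℂ] H)).topologicalClosure := by
      rw [hker, Submodule.orthogonal_orthogonal_eq_closure]
    rw [this] at hξ
    exact hξ
  have hC : IsClosed {x : H | ε * ‖x‖ ^ 2 ≤ (⟪T x, x⟫_ℂ).re} := by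
    apply isClosed_le
    · fun_prop
    · exact (Complex.continuous_re.comp ((T.continuous.inner continuous_id)))
  have hsub : ((LinearMap.range (T : H →ₗ[ℂ] H) : Submodule ℂ H) : Set H) ⊆
      {x : H | ε * ‖x‖ ^ 2 ≤ (⟪T x, x⟫_ℂ).re} := by
    rintro _ ⟨η, rfl⟩
    exact key η
  exact hC.closure_subset ((closure_mono hsub).trans (by rw [hC.closure_eq]) hclos)
end

section
/- Let m ≥ 2, n ≥ 2, ζ = exp(2πi/(2m)), and define η = (1, ζ, ζ + ζ|1−ζ|, …, ζ + ζ|1−ζ|(n−2)) ∈ ℂⁿ. Then ‖η‖² = 2 + ∑_{j=1}^{n−2} |1 + |1−ζ| j|², and for every generator s in the standard generating set S of the complex reflection group G(m,m,n), ‖s·η − η‖² = 2|1−ζ|². -/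
open Finset Complex

/-- The monomial matrix `[(a₁,…,a_n), σ]` whose `(i, σ(i))` entry is `a i`. -/
def monomialMat {n : ℕ} (a : Fin n → ℂ) (σ : Equiv.Perm (Fin n)) :
    Matrix (Fin n) (Fin n) ℂ :=
  Matrix.of fun i j => if j = σ i then a i else 0

/-- The standard generating set of `G(m,m,n)` as a set of `n×n` complex matrices:
the adjacent transposition matrices and `[(ζ_m⁻¹, ζ_m, 1,…,1), (1,2)]`. -/
noncomputable def genSetGmmn (m n : ℕ) : Set (Matrix (Fin n) (Fin n) ℂ) :=
  {A | (∃ (i : ℕ) (h : i + 1 < n),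
          A = monomialMat (fun _ => 1)
                (Equiv.swap ⟨i, Nat.lt_of_succ_lt h⟩ ⟨i + 1, h⟩)) ∨
       (∃ h : 1 < n,
          A = monomialMat
                (fun k => if (k : ℕ) = 0 then (Complex.exp (2 * Real.pi * I / m))⁻¹
                  else if (k : ℕ) = 1 then Complex.exp (2 * Real.pi * I / m) else 1)
                (Equiv.swap ⟨0, Nat.lt_of_succ_lt h⟩ ⟨1, h⟩))}

/-- The witness vector `η = (1, ζ, ζ + ζ|1−ζ|, …, ζ + ζ|1−ζ|(n−2))` with `ζ = ζ_{2m}`. -/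
noncomputable def etaVec (m n : ℕ) : Fin n → ℂ :=
  fun j =>
    let ζ : ℂ := Complex.exp (2 * Real.pi * I / (2 * m))
    if (j : ℕ) = 0 then 1
    else ζ + ζ * (Norm.norm (1 - ζ) : ℂ) * (((j : ℕ) - 1 : ℕ) : ℂ)

lemma monomialMat_mulVec {n : ℕ} (a : Fin n → ℂ) (σ : Equiv.Perm (Fin n))
    (v : Fin n → ℂ) (i : Fin n) :
    (monomialMat a σ).mulVec v i = a i * v (σ i) := by
  simp only [monomialMat, Matrix.mulVec, dotProduct, Matrix.of_apply, ite_mul, zero_mul]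
  rw [Finset.sum_ite_eq' Finset.univ (σ i) (fun j => a i * v j)]
  simp

/-- Let `m ≥ 2`, `n ≥ 2`, `ζ = exp(2πi/(2m))` and
`η = (1, ζ, ζ + ζ|1−ζ|, …, ζ + ζ|1−ζ|(n−2)) ∈ ℂⁿ`. Then
`‖η‖² = 2 + ∑_{j=1}^{n−2} |1 + |1−ζ| j|²` and for every generator `s` in the standard
generating set `S` of `G(m,m,n)`, `‖s·η − η‖² = 2|1−ζ|²`. -/
theorem etaVec_norms (m n : ℕ) (hm : 2 ≤ m) (hn : 2 ≤ n) :
    (∑ j : Fin n, Norm.norm (etaVec m n j) ^ 2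
        = 2 + ∑ j ∈ Finset.Icc 1 (n - 2),
            Norm.norm (1 + (Norm.norm (1 - Complex.exp (2 * Real.pi * I / (2 * m))) : ℂ)
              * (j : ℂ)) ^ 2) ∧
    (∀ A ∈ genSetGmmn m n,
      ∑ j : Fin n, Norm.norm ((A.mulVec (etaVec m n) - etaVec m n) j) ^ 2
        = 2 * Norm.norm (1 - Complex.exp (2 * Real.pi * I / (2 * m))) ^ 2) := by
  have hm0 : (m : ℂ) ≠ 0 := by
    exact_mod_cast Nat.cast_ne_zero.mpr (by omega)
  set z : ℂ := 2 * Real.pi * I / (2 * m) with hz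
  set ζ : ℂ := Complex.exp z with hzeta
  have hζ0 : ζ ≠ 0 := Complex.exp_ne_zero z
  have hζabs : Norm.norm ζ = 1 := by
    have hzeq : z = ((Real.pi / m : ℝ) : ℂ) * I := by
      rw [hz]; push_cast; field_simp
    rw [hzeta, hzeq, Complex.norm_exp_ofReal_mul_I]
  set c : ℝ := Norm.norm (1 - ζ) with hc
  have hc0 : (0:ℝ) ≤ c := norm_nonneg _
  have habsc : Norm.norm ((c : ℝ) : ℂ) = c := by
    rw [Complex.norm_real, Real.norm_eq_abs]; exact abs_of_nonneg hc0
  have heta : ∀ j : Fin n, etaVec m n j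
      = if (j : ℕ) = 0 then 1 else ζ + ζ * (c : ℂ) * (((j : ℕ) - 1 : ℕ) : ℂ) := fun j => rfl
  constructor
  · -- Part 1
    have h1 : ∀ j : Fin n, Norm.norm (etaVec m n j) ^ 2
        = (fun k : ℕ => Norm.norm
            (if k = 0 then 1 else ζ + ζ * (c : ℂ) * ((k - 1 : ℕ) : ℂ)) ^ 2) (j : ℕ) := by
      intro j; simp only [heta j]
    rw [Finset.sum_congr rfl (fun j _ => h1 j),
      Fin.sum_univ_eq_sum_range
        (fun k : ℕ => Norm.norm (if k = 0 then 1 else ζ + ζ * (c : ℂ) * ((k - 1 : ℕ) : ℂ)) ^ 2) n]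
    rw [Finset.range_eq_Ico,
      ← Finset.sum_Ico_consecutive _ (by omega : (0:ℕ) ≤ 2) (by omega : 2 ≤ n)]
    have h01 : (Finset.Ico 0 2 : Finset ℕ) = {0, 1} := rfl
    rw [h01]
    have hsum01 : ∑ k ∈ ({0, 1} : Finset ℕ), (fun k : ℕ => Norm.norm
            (if k = 0 then 1 else ζ + ζ * (c : ℂ) * ((k - 1 : ℕ) : ℂ)) ^ 2) k = 2 := by
      norm_num
      rw [hζabs]; norm_num
    rw [hsum01]
    congr 1
    rw [Finset.sum_Ico_eq_sum_range, ← Finset.Ico_add_one_right_eq_Icc, Finset.sum_Ico_eq_sum_range]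
    have hnn : n - 2 + 1 - 1 = n - 2 := by omega
    rw [hnn]
    apply Finset.sum_congr rfl
    intro i _
    have h2 : (2 + i : ℕ) ≠ 0 := by omega
    have h3 : (2 + i - 1 : ℕ) = 1 + i := by omega
    have h4 : ζ + ζ * (c : ℂ) * ((1 + i : ℕ) : ℂ) = ζ * (1 + (c : ℂ) * ((1 + i : ℕ) : ℂ)) := by
      ring
    rw [if_neg h2, h3, h4, norm_mul, hζabs, one_mul]
  · -- Part 2
    intro A hA
    rcases hA with ⟨i, h, rfl⟩ | ⟨h, rfl⟩
    · set i0 : Fin n := ⟨i, Nat.lt_of_succ_lt h⟩ with hi0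
      set i1 : Fin n := ⟨i + 1, h⟩ with hi1
      have hne : i0 ≠ i1 := by
        simp [hi0, hi1, Fin.ext_iff]
      rw [Finset.sum_eq_add_of_mem i0 i1 (Finset.mem_univ _) (Finset.mem_univ _) hne ?_]
      · simp only [Pi.sub_apply, monomialMat_mulVec, one_mul,
          Equiv.swap_apply_left, Equiv.swap_apply_right]
        have hd : Norm.norm (etaVec m n i1 - etaVec m n i0) = c := by
          have hv1 : etaVec m n i1 = ζ + ζ * (c : ℂ) * (i : ℂ) := by
            rw [heta i1]
            have : ((i1 : ℕ)) = i + 1 := rfl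
            rw [this]
            simp
          rcases Nat.eq_zero_or_pos i with hi | hi
          · have hv0 : etaVec m n i0 = 1 := by
              rw [heta i0]; simp [hi0, hi]
            rw [hv1, hv0, hi]
            have : ζ + ζ * (c : ℂ) * ((0:ℕ) : ℂ) - 1 = -(1 - ζ) := by push_cast; ring
            rw [this, norm_neg]
          · have hv0 : etaVec m n i0 = ζ + ζ * (c : ℂ) * ((i : ℂ) - 1) := by
              rw [heta i0]
              have h5 : ((i0 : ℕ)) = i := rfl
              rw [h5, if_neg (by omega)]
              rw [Nat.cast_sub hi]
              norm_num
            rw [hv1, hv0]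
            have : ζ + ζ * (c : ℂ) * (i : ℂ) - (ζ + ζ * (c : ℂ) * ((i : ℂ) - 1))
                = ζ * (c : ℂ) := by ring
            rw [this, norm_mul, hζabs, one_mul, habsc]
        have hd' : Norm.norm (etaVec m n i0 - etaVec m n i1) = c := by
          rw [norm_sub_rev, hd]
        rw [hd, hd']; ring
      · intro k _ hk
        have hfix : Equiv.swap i0 i1 k = k :=
          Equiv.swap_apply_of_ne_of_ne hk.1 hk.2
        simp [Pi.sub_apply, monomialMat_mulVec, hfix]
    · set i0 : Fin n := ⟨0, Nat.lt_of_succ_lt h⟩ with hi0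
      set i1 : Fin n := ⟨1, h⟩ with hi1
      have hne : i0 ≠ i1 := by simp [hi0, hi1, Fin.ext_iff]
      have hesq : Complex.exp (2 * Real.pi * I / m) = ζ * ζ := by
        rw [hzeta, ← Complex.exp_add]
        congr 1
        rw [hz]
        field_simp
        ring
      rw [Finset.sum_eq_add_of_mem i0 i1 (Finset.mem_univ _) (Finset.mem_univ _) hne ?_]
      · simp only [Pi.sub_apply, monomialMat_mulVec,
          Equiv.swap_apply_left, Equiv.swap_apply_right]
        have hv0 : etaVec m n i0 = 1 := by rw [heta i0]; simp [hi0]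
        have hv1 : etaVec m n i1 = ζ := by
          rw [heta i1]
          have : ((i1 : ℕ)) = 1 := rfl
          rw [this]
          simp
        have ha0 : ((i0 : Fin n) : ℕ) = 0 := rfl
        have ha1 : ((i1 : Fin n) : ℕ) = 1 := rfl
        simp only [ha0, ha1, if_pos, if_neg one_ne_zero, hesq, hv0, hv1]
        have hd0 : (ζ * ζ)⁻¹ * ζ - 1 = ζ⁻¹ * (1 - ζ) := by field_simp
        have hd1 : ζ * ζ * 1 - ζ = -(ζ * (1 - ζ)) := by ring
        rw [hd0, hd1, norm_neg, norm_mul, norm_mul, norm_inv, hζabs]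
        norm_num
        ring
      · intro k _ hk
        have hk0 : ((k : Fin n) : ℕ) ≠ 0 := fun hh => hk.1 (Fin.ext hh)
        have hk1 : ((k : Fin n) : ℕ) ≠ 1 := fun hh => hk.2 (Fin.ext hh)
        have hfix : Equiv.swap i0 i1 k = k :=
          Equiv.swap_apply_of_ne_of_ne hk.1 hk.2
        simp [Pi.sub_apply, monomialMat_mulVec, hfix, hk0, hk1]
end

section
/- For m ≥ 2 and n ≥ 2, the Kazhdan constant of G(m,m,n) with respect to its standard generating set S satisfies κ(G(m,m,n), S) ≤ √( 2|1−ζ_{2m}|² / (2 + ∑_{j=1}^{n−2} |1 + |1−ζ_{2m}| j|²) ). -/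
open Finset Complex

/-- The Kazhdan constant `κ(G,S)`: the infimum, over all unitary representations `π`
without non-zero invariant vectors and all unit vectors `ξ`, of
`sup_{s ∈ S} ‖π(s)ξ − ξ‖`. -/
noncomputable def kazhdanConstant (G : Type*) [Group G] (S : Set G) : ℝ :=
  sInf {r | ∃ (H : Type) (_ : NormedAddCommGroup H) (_ : InnerProductSpace ℂ H)
      (π : G →* (H ≃ₗᵢ[ℂ] H)),
      (∀ ξ : H, (∀ g : G, π g ξ = ξ) → ξ = 0) ∧
      ∃ ξ : H, ‖ξ‖ = 1 ∧ r = ⨆ s ∈ S, ‖π s ξ - ξ‖}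

/-! ### Auxiliary machinery -/

lemma monomial_mulVec {n : ℕ} (a : Fin n → ℂ) (σ : Equiv.Perm (Fin n)) (x : Fin n → ℂ) :
    (monomialMat a σ).mulVec x = fun i => a i * x (σ i) := by
  funext i
  simp [Matrix.mulVec, monomialMat, dotProduct, ite_mul]

/-- Identity map into the Euclidean-space type synonym. -/
def toE {n : ℕ} (x : Fin n → ℂ) : EuclideanSpace ℂ (Fin n) := WithLp.toLp 2 x

lemma toE_add {n : ℕ} (x y : Fin n → ℂ) : toE (x + y) = toE x + toE y := rfl
lemma toE_smul {n : ℕ} (c : ℂ) (x : Fin n → ℂ) : toE (c • x) = c • toE x := rfl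
lemma toE_sub {n : ℕ} (x y : Fin n → ℂ) : toE (x - y) = toE x - toE y := rfl

lemma toE_norm {n : ℕ} (x : Fin n → ℂ) :
    ‖toE x‖ = Real.sqrt (∑ i, ‖x i‖ ^ 2) := by
  rw [EuclideanSpace.norm_eq]; rfl

lemma monomial_norm {n : ℕ} (a : Fin n → ℂ) (σ : Equiv.Perm (Fin n))
    (ha : ∀ i, ‖a i‖ = 1) (x : Fin n → ℂ) :
    ‖toE ((monomialMat a σ).mulVec x)‖ = ‖toE x‖ := by
  rw [toE_norm, toE_norm]
  congr 1
  rw [← Equiv.sum_comp σ (fun i => ‖x i‖ ^ 2)]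
  refine Finset.sum_congr rfl fun i _ => ?_
  rw [monomial_mulVec]
  simp only [norm_mul, ha]
  ring

noncomputable def matIso {n : ℕ} (M : (Matrix (Fin n) (Fin n) ℂ)ˣ)
    (hM : ∀ x : Fin n → ℂ, ‖toE (M.val.mulVec x)‖ = ‖toE x‖) :
    EuclideanSpace ℂ (Fin n) ≃ₗᵢ[ℂ] EuclideanSpace ℂ (Fin n) where
  toFun := fun x => toE (M.val.mulVec x)
  invFun := fun x => toE ((M⁻¹).val.mulVec x)
  map_add' := fun x y => by
    show toE (M.val.mulVec ((x : Fin n → ℂ) + y)) = _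
    rw [Matrix.mulVec_add, toE_add]
  map_smul' := fun c x => by
    show toE (M.val.mulVec (c • (x : Fin n → ℂ))) = c • toE (M.val.mulVec x)
    rw [Matrix.mulVec_smul, toE_smul]
  left_inv := fun x => by
    show toE ((M⁻¹).val.mulVec (M.val.mulVec x)) = x
    simp only [Matrix.mulVec_mulVec, ← Units.val_mul, inv_mul_cancel, Units.val_one,
      Matrix.one_mulVec]
    rfl
  right_inv := fun x => by
    show toE (M.val.mulVec ((M⁻¹).val.mulVec x)) = x
    simp only [Matrix.mulVec_mulVec, ← Units.val_mul, mul_inv_cancel, Units.val_one,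
      Matrix.one_mulVec]
    rfl
  norm_map' := fun x => hM x.ofLp

lemma matIso_apply {n : ℕ} (M : (Matrix (Fin n) (Fin n) ℂ)ˣ) (hM) (x : EuclideanSpace ℂ (Fin n)) :
    matIso M hM x = toE (M.val.mulVec x) := rfl

noncomputable def repE {n : ℕ} {G : Type} [Group G] (ρ : G →* (Matrix (Fin n) (Fin n) ℂ)ˣ)
    (hU : ∀ g, ∀ x : Fin n → ℂ, ‖toE ((ρ g).val.mulVec x)‖ = ‖toE x‖) :
    G →* (EuclideanSpace ℂ (Fin n) ≃ₗᵢ[ℂ] EuclideanSpace ℂ (Fin n)) where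
  toFun := fun g => matIso (ρ g) (hU g)
  map_one' := by
    refine LinearIsometryEquiv.ext fun x => ?_
    rw [LinearIsometryEquiv.coe_one, id]
    show toE ((ρ 1).val.mulVec x) = x
    simp only [map_one, Units.val_one, Matrix.one_mulVec]
    rfl
  map_mul' := fun g h => by
    refine LinearIsometryEquiv.ext fun x => ?_
    rw [LinearIsometryEquiv.coe_mul, Function.comp_apply]
    show toE ((ρ (g * h)).val.mulVec x) = matIso (ρ g) (hU g) (matIso (ρ h) (hU h) x)
    rw [matIso_apply, matIso_apply]
    show _ = toE ((ρ g).val.mulVec ((ρ h).val.mulVec x))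
    rw [Matrix.mulVec_mulVec, ← Units.val_mul, map_mul]

lemma repE_apply {n : ℕ} {G : Type} [Group G] (ρ : G →* (Matrix (Fin n) (Fin n) ℂ)ˣ)
    (hU) (g : G) (x : EuclideanSpace ℂ (Fin n)) :
    repE ρ hU g x = toE ((ρ g).val.mulVec x) := rfl

lemma abs_zetam (m : ℕ) : ‖Complex.exp (2 * Real.pi * I / m)‖ = 1 := by
  rw [show (2 * (Real.pi:ℂ) * I / m) = ((2*Real.pi/m : ℝ) : ℂ) * I by push_cast; ring]
  exact Complex.norm_exp_ofReal_mul_I _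

lemma abs_zeta2m (m : ℕ) : ‖Complex.exp (2 * Real.pi * I / (2 * m))‖ = 1 := by
  rw [show (2 * (Real.pi:ℂ) * I / (2*m)) = ((2*Real.pi/(2*m) : ℝ) : ℂ) * I by push_cast; ring]
  exact Complex.norm_exp_ofReal_mul_I _

lemma zeta2m_sq (m : ℕ) (hm : m ≠ 0) :
    Complex.exp (2 * Real.pi * I / (2 * m)) * Complex.exp (2 * Real.pi * I / (2 * m))
      = Complex.exp (2 * Real.pi * I / m) := by
  rw [← Complex.exp_add]
  congr 1
  have hm' : (m : ℂ) ≠ 0 := Nat.cast_ne_zero.mpr hm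
  field_simp
  ring

lemma zetam_ne_one (m : ℕ) (hm : 2 ≤ m) : Complex.exp (2 * Real.pi * I / m) ≠ 1 := by
  intro h
  rw [Complex.exp_eq_one_iff] at h
  obtain ⟨k, hk⟩ := h
  have hm' : (m : ℂ) ≠ 0 := Nat.cast_ne_zero.mpr (by omega)
  have hpi : (2 * (Real.pi:ℂ) * I) ≠ 0 := by
    simp [Real.pi_ne_zero, Complex.I_ne_zero]
  have h1 : (1 : ℂ) = k * m := by
    field_simp at hk
    have h1' : (1:ℂ) * (2*(Real.pi:ℂ)*I) = ((k:ℂ) * m) * (2*(Real.pi:ℂ)*I) := by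
      linear_combination (2*(Real.pi:ℂ)*I) * hk
    exact mul_right_cancel₀ hpi h1'
  have : ((1 : ℤ) : ℂ) = ((k * m : ℤ) : ℂ) := by push_cast; exact h1
  have h2 : (1 : ℤ) = k * m := Int.cast_injective this
  have : (m : ℤ) ∣ 1 := Dvd.intro_left k h2.symm
  have := Int.le_of_dvd one_pos this
  omega

lemma sum_two {n : ℕ} (f : Fin n → ℝ) (i j : Fin n) (hij : i ≠ j)
    (h0 : ∀ k, k ≠ i → k ≠ j → f k = 0) : ∑ k, f k = f i + f j := by
  rw [← Finset.sum_pair hij]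
  symm
  apply Finset.sum_subset (Finset.subset_univ _)
  intro k _ hk
  simp only [Finset.mem_insert, Finset.mem_singleton, not_or] at hk
  exact h0 k hk.1 hk.2

/-- The witness vector's coordinates. -/
noncomputable def Vvec (ω : ℂ) (a : ℝ) : ℕ → ℂ :=
  fun k => if k = 0 then 1 else ω * (1 + (a : ℂ) * ((k - 1 : ℕ) : ℂ))

lemma Vvec_zero (ω : ℂ) (a : ℝ) : Vvec ω a 0 = 1 := rfl

lemma Vvec_succ (ω : ℂ) (a : ℝ) (k : ℕ) : Vvec ω a (k+1) = ω * (1 + (a:ℂ) * k) := by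
  simp [Vvec]

lemma Vvec_step (ω : ℂ) (hω : ‖ω‖ = 1) (a : ℝ) (ha : a = ‖1 - ω‖)
    (i : ℕ) : ‖Vvec ω a (i+1) - Vvec ω a i‖ = a := by
  have ha0 : 0 ≤ a := ha ▸ norm_nonneg _
  cases i with
  | zero =>
    rw [Vvec_zero, Vvec_succ]
    push_cast
    rw [mul_zero, add_zero, mul_one, norm_sub_rev, ha]
  | succ j =>
    rw [Vvec_succ, Vvec_succ]
    have : ω * (1 + (a:ℂ) * (j+1:ℕ)) - ω * (1 + (a:ℂ) * j) = ω * a := by push_cast; ring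
    rw [this, norm_mul, hω, one_mul, Complex.norm_of_nonneg ha0]

/-- For `m ≥ 2` and `n ≥ 2`, the Kazhdan constant of `G(m,m,n)`
(realized as any abstract group `G` with generating set `S` carried isomorphically to the
standard generating matrices of `G(m,m,n)`) satisfies
`κ(G(m,m,n), S) ≤ √(2|1−ζ_{2m}|² / (2 + ∑_{j=1}^{n−2} |1 + |1−ζ_{2m}| j|²))`. -/
theorem kazhdan_upper_bound_Gmmn (m n : ℕ) (hm : 2 ≤ m) (hn : 2 ≤ n)
    (G : Type) [Group G] (S : Set G)
    (hgen : Subgroup.closure S = ⊤)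
    (ρ : G →* (Matrix (Fin n) (Fin n) ℂ)ˣ)
    (hinj : Function.Injective ρ)
    (himg : (fun g => ((ρ g : (Matrix (Fin n) (Fin n) ℂ)ˣ) : Matrix (Fin n) (Fin n) ℂ)) '' S
      = genSetGmmn m n) :
    kazhdanConstant G S ≤
      Real.sqrt (2 * ‖1 - Complex.exp (2 * Real.pi * I / (2 * m))‖ ^ 2 /
        (2 + ∑ j ∈ Finset.Icc 1 (n - 2),
          ‖1 + ((‖1 - Complex.exp (2 * Real.pi * I / (2 * m))‖ : ℝ) : ℂ)
            * (j : ℂ)‖ ^ 2)) := by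
  classical
  have hm0 : m ≠ 0 := by omega
  set ω : ℂ := Complex.exp (2 * Real.pi * I / (2 * m)) with hωdef
  set ζ : ℂ := Complex.exp (2 * Real.pi * I / m) with hζdef
  set a : ℝ := ‖1 - ω‖ with hadef
  have habsω : ‖ω‖ = 1 := abs_zeta2m m
  have habsζ : ‖ζ‖ = 1 := abs_zetam m
  have hωζ : ω * ω = ζ := zeta2m_sq m hm0
  have hζ1 : ζ ≠ 1 := zetam_ne_one m hm
  have hω0 : ω ≠ 0 := by
    intro h0; rw [h0] at habsω; simp at habsω
  have ha0 : 0 ≤ a := norm_nonneg _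
  -- unitarity of the generators
  have hSU : ∀ s ∈ S, ∀ x : Fin n → ℂ, ‖toE ((ρ s).val.mulVec x)‖ = ‖toE x‖ := by
    intro s hs
    have hmem : (ρ s).val ∈ genSetGmmn m n := by
      rw [← himg]; exact ⟨s, hs, rfl⟩
    rcases hmem with ⟨i, h, hA⟩ | ⟨h, hA⟩
    · rw [hA]; exact monomial_norm _ _ (fun i => by simp)
    · rw [hA]
      refine monomial_norm _ _ (fun k => ?_)
      by_cases h0 : (k : ℕ) = 0
      · simp only [h0, if_true]
        rw [norm_inv, abs_zetam, inv_one]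
      · by_cases h1 : (k : ℕ) = 1
        · simp only [h0, h1, if_false, if_true]
          exact abs_zetam m
        · simp [h0, h1]
  -- unitarity of all group elements
  have hU : ∀ g, ∀ x : Fin n → ℂ, ‖toE ((ρ g).val.mulVec x)‖ = ‖toE x‖ := by
    let K : Subgroup G :=
      { carrier := {g | ∀ x : Fin n → ℂ, ‖toE ((ρ g).val.mulVec x)‖ = ‖toE x‖}
        one_mem' := by
          intro x
          simp only [map_one, Units.val_one, Matrix.one_mulVec]
        mul_mem' := by
          intro g h hg hh x
          rw [map_mul, Units.val_mul, ← Matrix.mulVec_mulVec]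
          exact (hg _).trans (hh x)
        inv_mem' := by
          intro g hg x
          have h2 := hg (((ρ g⁻¹).val).mulVec x)
          rw [Matrix.mulVec_mulVec, ← Units.val_mul, ← map_mul, mul_inv_cancel, map_one,
            Units.val_one, Matrix.one_mulVec] at h2
          exact h2.symm }
    intro g
    have hg : g ∈ Subgroup.closure S := by rw [hgen]; trivial
    exact (Subgroup.closure_le K).mpr hSU hg
  set π := repE ρ hU with hπdef
  -- the witness vector
  set v : Fin n → ℂ := fun k => Vvec ω a (k : ℕ) with hvdef
  set N : ℝ := 2 + ∑ j ∈ Finset.Icc 1 (n - 2), ‖1 + (a:ℂ) * (j:ℂ)‖ ^ 2 with hNdef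
  have hNpos : 0 < N := by
    rw [hNdef]
    have : 0 ≤ ∑ j ∈ Finset.Icc 1 (n - 2), ‖1 + (a:ℂ) * (j:ℂ)‖ ^ 2 :=
      Finset.sum_nonneg fun _ _ => sq_nonneg _
    linarith
  have hvnorm : ‖toE v‖ = Real.sqrt N := by
    rw [toE_norm]
    congr 1
    rw [show (∑ i : Fin n, ‖v i‖ ^ 2)
        = ∑ i ∈ Finset.range n, ‖Vvec ω a i‖ ^ 2 from
      Fin.sum_univ_eq_sum_range (fun i => ‖Vvec ω a i‖ ^ 2) n]
    obtain ⟨n'', rfl⟩ : ∃ k, n = k + 2 := ⟨n - 2, by omega⟩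
    rw [Finset.sum_range_succ' (fun i => ‖Vvec ω a i‖ ^ 2) (n'' + 1),
      Finset.sum_range_succ' (fun i => ‖Vvec ω a (i + 1)‖ ^ 2) n'']
    have hF0 : ‖Vvec ω a 0‖ ^ 2 = 1 := by
      rw [Vvec_zero]; simp
    have hF1 : ‖Vvec ω a (0 + 1)‖ ^ 2 = 1 := by
      rw [Vvec_succ]
      push_cast
      rw [mul_zero, add_zero, mul_one, habsω, one_pow]
    have hFk : ∀ k : ℕ, ‖Vvec ω a (k + 1 + 1)‖ ^ 2
        = ‖1 + (a:ℂ) * ((k+1 : ℕ) : ℂ)‖ ^ 2 := by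
      intro k
      rw [Vvec_succ, norm_mul, habsω, one_mul]
    rw [hF0, hF1, hNdef]
    have hIcc : ∑ j ∈ Finset.Icc 1 (n'' + 2 - 2), ‖1 + (a:ℂ) * (j:ℂ)‖ ^ 2
        = ∑ k ∈ Finset.range n'', ‖1 + (a:ℂ) * ((1 + k : ℕ) : ℂ)‖ ^ 2 := by
      rw [show n'' + 2 - 2 = n'' from rfl, ← Finset.Ico_add_one_right_eq_Icc,
        Finset.sum_Ico_eq_sum_range]
      simp
    rw [hIcc]
    rw [Finset.sum_congr rfl (fun k _ => hFk k)]
    rw [Finset.sum_congr rfl (fun k (_ : k ∈ Finset.range n'') =>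
      (by rw [Nat.add_comm 1 k] :
        ‖1 + (a:ℂ) * ((1 + k : ℕ) : ℂ)‖ ^ 2
          = ‖1 + (a:ℂ) * ((k + 1 : ℕ) : ℂ)‖ ^ 2))]
    ring
  have hvpos : 0 < ‖toE v‖ := by rw [hvnorm]; exact Real.sqrt_pos.mpr hNpos
  set c : ℂ := ((‖toE v‖⁻¹ : ℝ) : ℂ) with hcdef
  set ξ : EuclideanSpace ℂ (Fin n) := c • toE v with hξdef
  have hξ1 : ‖ξ‖ = 1 := by
    rw [hξdef, norm_smul, hcdef, Complex.norm_real, Real.norm_eq_abs,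
      _root_.abs_of_nonneg (inv_nonneg.mpr hvpos.le), inv_mul_cancel₀ hvpos.ne']
  -- norm of the generator differences
  have hgendiff : ∀ A ∈ genSetGmmn m n, ‖toE (A.mulVec v - v)‖ = Real.sqrt (2 * a ^ 2) := by
    rintro A (⟨i, h, rfl⟩ | ⟨h, rfl⟩)
    · set i' : Fin n := ⟨i, Nat.lt_of_succ_lt h⟩ with hi'
      set j' : Fin n := ⟨i + 1, h⟩ with hj'
      have hij : i' ≠ j' := by
        simp only [hi', hj', Fin.ne_iff_vne]
        omega
      have hd : ∀ k, ((monomialMat (fun _ => (1:ℂ)) (Equiv.swap i' j')).mulVec v - v) k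
          = v (Equiv.swap i' j' k) - v k := by
        intro k
        rw [Pi.sub_apply, monomial_mulVec]
        simp
      rw [toE_norm]
      rw [sum_two _ i' j' hij ?_]
      · have h1 : ‖((monomialMat (fun _ => (1:ℂ)) (Equiv.swap i' j')).mulVec v - v) i'‖
            = a := by
          rw [hd, Equiv.swap_apply_left]
          show ‖Vvec ω a (i + 1) - Vvec ω a i‖ = a
          exact Vvec_step ω habsω a hadef i
        have h2 : ‖((monomialMat (fun _ => (1:ℂ)) (Equiv.swap i' j')).mulVec v - v) j'‖
            = a := by
          rw [hd, Equiv.swap_apply_right]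
          show ‖Vvec ω a i - Vvec ω a (i + 1)‖ = a
          rw [norm_sub_rev]
          exact Vvec_step ω habsω a hadef i
        rw [h1, h2]
        congr 1
        ring
      · intro k hk1 hk2
        rw [hd, Equiv.swap_apply_of_ne_of_ne hk1 hk2, sub_self]
        simp
    · set z : Fin n := ⟨0, Nat.lt_of_succ_lt h⟩ with hz
      set o : Fin n := ⟨1, h⟩ with ho
      set bf : Fin n → ℂ := fun k => if (k : ℕ) = 0 then ζ⁻¹
          else if (k : ℕ) = 1 then ζ else 1 with hbf
      have hzo : z ≠ o := by
        simp only [hz, ho, Fin.ne_iff_vne]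
        omega
      have hd : ∀ k, ((monomialMat bf (Equiv.swap z o)).mulVec v - v) k
          = bf k * v (Equiv.swap z o k) - v k := by
        intro k
        rw [Pi.sub_apply, monomial_mulVec]
      have hvz : v z = 1 := by
        show Vvec ω a 0 = 1
        exact Vvec_zero ω a
      have hvo : v o = ω := by
        show Vvec ω a 1 = ω
        rw [show (1:ℕ) = 0 + 1 from rfl, Vvec_succ]
        push_cast
        ring
      rw [toE_norm]
      rw [sum_two _ z o hzo ?_]
      · have h1 : ‖((monomialMat bf (Equiv.swap z o)).mulVec v - v) z‖ = a := by
          rw [hd, Equiv.swap_apply_left, hvo, hvz]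
          have hbz : bf z = ζ⁻¹ := rfl
          rw [hbz]
          have : ζ⁻¹ * ω - 1 = ω⁻¹ * (1 - ω) := by
            rw [← hωζ]
            field_simp
          rw [this, norm_mul, norm_inv, habsω, inv_one, one_mul, ← hadef]
        have h2 : ‖((monomialMat bf (Equiv.swap z o)).mulVec v - v) o‖ = a := by
          rw [hd, Equiv.swap_apply_right, hvo, hvz]
          have hbo : bf o = ζ := rfl
          rw [hbo]
          have : ζ * 1 - ω = ω * (ω - 1) := by rw [← hωζ]; ring
          rw [this, norm_mul, habsω, one_mul, norm_sub_rev, ← hadef]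
        rw [h1, h2]
        congr 1
        ring
      · intro k hk1 hk2
        have hk0 : (k : ℕ) ≠ 0 := by
          intro hk0
          exact hk1 (by rw [hz]; exact Fin.ext hk0)
        have hk1' : (k : ℕ) ≠ 1 := by
          intro hkk
          exact hk2 (by rw [ho]; exact Fin.ext hkk)
        rw [hd, Equiv.swap_apply_of_ne_of_ne hk1 hk2]
        have : bf k = 1 := by rw [hbf]; simp [hk0, hk1']
        rw [this, one_mul, sub_self]
        simp
  -- value at each generator
  have hterm : ∀ s ∈ S, ‖π s ξ - ξ‖ = Real.sqrt (2 * a ^ 2 / N) := by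
    intro s hs
    have hmem : (ρ s).val ∈ genSetGmmn m n := by
      rw [← himg]; exact ⟨s, hs, rfl⟩
    have h1 : π s ξ - ξ = c • toE ((ρ s).val.mulVec v - v) := by
      rw [hξdef, map_smul, ← smul_sub]
      rw [hπdef, repE_apply, toE_sub]
      rfl
    rw [h1, norm_smul, hcdef, Complex.norm_real, Real.norm_eq_abs,
      _root_.abs_of_nonneg (inv_nonneg.mpr hvpos.le), hgendiff _ hmem,
      Real.sqrt_div (by positivity) N, hvnorm, inv_mul_eq_div]
  -- no nonzero invariant vectors
  have hinvariant : ∀ ξ₀ : EuclideanSpace ℂ (Fin n), (∀ g : G, π g ξ₀ = ξ₀) → ξ₀ = 0 := by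
    intro ξ₀ hfix
    have key : ∀ A ∈ genSetGmmn m n, A.mulVec ξ₀ = ξ₀ := by
      intro A hA
      rw [← himg] at hA
      obtain ⟨s, hs, hAs⟩ := hA
      have hh := hfix s
      rw [hπdef, repE_apply] at hh
      rw [← hAs]
      exact congrArg WithLp.ofLp hh
    have hn1 : 1 < n := by omega
    have hchain : ∀ i (hi : i + 1 < n), ξ₀ ⟨i + 1, hi⟩ = ξ₀ ⟨i, Nat.lt_of_succ_lt hi⟩ := by
      intro i hi
      have hA := key _ (Or.inl ⟨i, hi, rfl⟩)
      have e3 := (congrFun (monomial_mulVec (fun _ => (1:ℂ))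
        (Equiv.swap ⟨i, Nat.lt_of_succ_lt hi⟩ ⟨i + 1, hi⟩) ξ₀)
        ⟨i, Nat.lt_of_succ_lt hi⟩).symm.trans (congrFun hA ⟨i, Nat.lt_of_succ_lt hi⟩)
      have e4 : (1:ℂ) * ξ₀ ((Equiv.swap (⟨i, Nat.lt_of_succ_lt hi⟩ : Fin n) ⟨i + 1, hi⟩)
          ⟨i, Nat.lt_of_succ_lt hi⟩) = ξ₀ ⟨i, Nat.lt_of_succ_lt hi⟩ := e3
      rw [Equiv.swap_apply_left, one_mul] at e4
      exact e4
    have hz0 : ξ₀ ⟨0, by omega⟩ = 0 := by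
      have hA := key _ (Or.inr ⟨hn1, rfl⟩)
      have e3 := (congrFun (monomial_mulVec
        (fun k => if (k : ℕ) = 0 then ζ⁻¹ else if (k : ℕ) = 1 then ζ else 1)
        (Equiv.swap ⟨0, Nat.lt_of_succ_lt hn1⟩ ⟨1, hn1⟩) ξ₀)
        ⟨1, hn1⟩).symm.trans (congrFun hA ⟨1, hn1⟩)
      have h2 : ζ * ξ₀ ((Equiv.swap (⟨0, Nat.lt_of_succ_lt hn1⟩ : Fin n) ⟨1, hn1⟩)
          ⟨1, hn1⟩) = ξ₀ ⟨1, hn1⟩ := e3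
      rw [Equiv.swap_apply_right] at h2
      have h3 := hchain 0 hn1
      rw [h3] at h2
      have h4 : (ζ - 1) * ξ₀ ⟨0, Nat.lt_of_succ_lt hn1⟩ = 0 := by
        rw [sub_mul, one_mul, h2, sub_self]
      rcases mul_eq_zero.mp h4 with h5 | h5
      · exact absurd (sub_eq_zero.mp h5) hζ1
      · exact h5
    have hall : ∀ k, ∀ hk : k < n, ξ₀ ⟨k, hk⟩ = 0 := by
      intro k
      induction k with
      | zero => intro hk; exact hz0
      | succ j ih =>
        intro hk
        rw [hchain j hk]
        exact ih (Nat.lt_of_succ_lt hk)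
    ext k
    exact hall k.val k.isLt
  -- conclusion
  rw [kazhdanConstant]
  refine csInf_le_of_le ⟨0, fun r hr => ?_⟩
    ⟨EuclideanSpace ℂ (Fin n), inferInstance, inferInstance, π, hinvariant, ξ, hξ1, rfl⟩ ?_
  · obtain ⟨H, _, _, π', hinv', ξ', hξ', rfl⟩ := hr
    exact Real.iSup_nonneg fun s => Real.iSup_nonneg fun _ => norm_nonneg _
  · exact Real.iSup_le (fun s => Real.iSup_le (fun hs => (hterm s hs).le) (Real.sqrt_nonneg _))
      (Real.sqrt_nonneg _)
end

section
/- For the dihedral group I₂(n) of order 2n (n ≥ 3) with its two standard Coxeter generators s, t, the Kazhdan constant is κ(I₂(n), {s,t}) = 2 sin(π/(2n)). -/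
open Complex Finset DihedralGroup

set_option maxHeartbeats 1000000
set_option linter.unusedSectionVars false

namespace KazhdanAux

variable (n : ℕ)

noncomputable def om : ℂ := Complex.exp ((2 * Real.pi / n : ℝ) * Complex.I)

lemma om_pow (m : ℕ) : om n ^ m = Complex.exp ((2 * Real.pi * m / n : ℝ) * Complex.I) := by
  rw [om, ← Complex.exp_nat_mul]
  congr 1
  push_cast
  ring

lemma om_pow_n (hn : 0 < n) : om n ^ n = 1 := by
  have hn' : (n:ℂ) ≠ 0 := Nat.cast_ne_zero.mpr hn.ne'
  rw [om_pow, Complex.exp_eq_one_iff]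
  refine ⟨1, ?_⟩
  push_cast
  field_simp

lemma om_pow_ne_one (hn : 0 < n) {m : ℕ} (h0 : 0 < m) (h1 : m < n) : om n ^ m ≠ 1 := by
  rw [om_pow]
  intro hone
  rw [Complex.exp_eq_one_iff] at hone
  obtain ⟨k, hk⟩ := hone
  have hn' : (n:ℝ) ≠ 0 := Nat.cast_ne_zero.mpr hn.ne'
  have hk' : ((2 * Real.pi * m / n : ℝ) : ℂ) * I = ((k * (2 * Real.pi) : ℝ) : ℂ) * I := by
    push_cast at hk ⊢
    linear_combination hk
  have h2 := mul_right_cancel₀ Complex.I_ne_zero hk'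
  have h3 : (2 * Real.pi * m / n : ℝ) = k * (2 * Real.pi) := Complex.ofReal_inj.mp h2
  have hpi : (0:ℝ) < Real.pi := Real.pi_pos
  have hm : (m : ℝ) = k * n := by
    field_simp at h3
    nlinarith [h3]
  have hmZ : (m : ℤ) = k * n := by exact_mod_cast hm
  have h0' : (0:ℤ) < m := by exact_mod_cast h0
  have h1' : (m:ℤ) < n := by exact_mod_cast h1
  rcases le_or_gt k 0 with h | h
  · nlinarith [hmZ, h0', mul_nonpos_of_nonpos_of_nonneg h (by positivity : (0:ℤ) ≤ n)]
  · have : 1 ≤ k := h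
    nlinarith [hmZ]

lemma conj_om_pow (m : ℕ) : (starRingEnd ℂ) (om n ^ m) * om n ^ m = 1 := by
  rw [← Complex.normSq_eq_conj_mul_self]
  have : ‖om n ^ m‖ = 1 := by
    rw [norm_pow, om, Complex.norm_exp_ofReal_mul_I, one_pow]
  rw [Complex.normSq_eq_norm_sq, this]
  norm_num


variable [NeZero n]

noncomputable def eps (j : ZMod n) : ℂ := om n ^ j.val

lemma hn0 : 0 < n := Nat.pos_of_ne_zero (NeZero.ne n)

lemma om_pow_mod (m : ℕ) : om n ^ (m % n) = om n ^ m := by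
  conv_rhs => rw [← Nat.mod_add_div m n]
  rw [pow_add, pow_mul, om_pow_n n (hn0 n), one_pow, mul_one]

lemma eps_zero : eps n 0 = 1 := by
  simp [eps, ZMod.val_zero]

lemma eps_add (i j : ZMod n) : eps n (i + j) = eps n i * eps n j := by
  rw [eps, eps, eps, ZMod.val_add, om_pow_mod, pow_add]

lemma eps_ne_one {j : ZMod n} (hj : j ≠ 0) : eps n j ≠ 1 := by
  have h0 : 0 < j.val := by
    rcases Nat.eq_zero_or_pos j.val with h | h
    · exact absurd (by rwa [ZMod.val_eq_zero] at h) hj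
    · exact h
  exact om_pow_ne_one n (hn0 n) h0 (ZMod.val_lt j)

lemma eps_pow_val (m j : ZMod n) : eps n (j * m) = (eps n m) ^ j.val := by
  rw [eps, eps, ← pow_mul, ZMod.val_mul, om_pow_mod, mul_comm]

lemma conj_eps (j : ZMod n) : (starRingEnd ℂ) (eps n j) = eps n (-j) := by
  have h1 : (starRingEnd ℂ) (eps n j) * eps n j = 1 := conj_om_pow n j.val
  have h2 : eps n (-j) * eps n j = 1 := by
    rw [← eps_add, neg_add_cancel, eps_zero]
  have hne : eps n j ≠ 0 := by
    intro h
    rw [h, mul_zero] at h2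
    exact one_ne_zero h2.symm
  exact mul_right_cancel₀ hne (h1.trans h2.symm)

lemma sum_zmod_eq_sum_range (f : ℕ → ℂ) :
    ∑ k : ZMod n, f k.val = ∑ i ∈ range n, f i := by
  refine Finset.sum_nbij' (fun k => k.val) (fun i => (i : ZMod n)) ?_ ?_ ?_ ?_ ?_
  · intro k _; exact mem_range.mpr (ZMod.val_lt k)
  · intro i _; exact mem_univ _
  · intro k _; exact ZMod.natCast_zmod_val k
  · intro i hi; exact ZMod.val_cast_of_lt (mem_range.mp hi)
  · intro k _; rfl

/-- Key delta: `∑ k, eps (k*m) = n` if `m = 0` else `0`. -/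
lemma sum_eps (m : ZMod n) :
    ∑ k : ZMod n, eps n (k * m) = if m = 0 then (n : ℂ) else 0 := by
  by_cases hm : m = 0
  · simp [hm, eps_zero, Finset.card_univ]
  · simp only [hm, if_false]
    have h1 : ∀ k : ZMod n, eps n (k * m) = (eps n m) ^ k.val := fun k => eps_pow_val n m k
    rw [Finset.sum_congr rfl (fun k _ => h1 k), sum_zmod_eq_sum_range n (fun i => eps n m ^ i)]
    rw [geom_sum_eq (eps_ne_one n hm) n]
    have : eps n m ^ n = 1 := by
      rw [eps, ← pow_mul, mul_comm, pow_mul, om_pow_n n (hn0 n), one_pow]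
    rw [this, sub_self, zero_div]


lemma cos_mono_bound (hn : 2 ≤ n) {m : ℕ} (h1 : 1 ≤ m) (h2 : m < n) :
    Real.cos (2 * Real.pi * m / n) ≤ Real.cos (2 * Real.pi / n) := by
  have hπ := Real.pi_pos
  have hn0 : (0:ℝ) < n := by positivity
  have hm1 : (1:ℝ) ≤ m := by exact_mod_cast h1
  have hmn : (m:ℝ) < n := by exact_mod_cast h2
  have hn2 : (2:ℝ) ≤ n := by exact_mod_cast hn
  have hmn1 : (m:ℝ) + 1 ≤ n := by exact_mod_cast h2
  rcases le_or_gt (2 * m) n with h | h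
  · have h' : 2 * (m:ℝ) ≤ n := by exact_mod_cast h
    apply Real.cos_le_cos_of_nonneg_of_le_pi
    · positivity
    · rw [div_le_iff₀ hn0]; nlinarith
    · rw [div_le_div_iff₀ hn0 hn0]
      nlinarith [mul_nonneg (mul_nonneg (by linarith : (0:ℝ) ≤ 2 * Real.pi)
        (by linarith : (0:ℝ) ≤ (m:ℝ) - 1)) hn0.le]
  · have h' : (n:ℝ) < 2 * m := by exact_mod_cast h
    have key : Real.cos (2 * Real.pi * m / n) = Real.cos (2 * Real.pi * ((n:ℝ) - m) / n) := by
      have heq : 2 * Real.pi * (m:ℝ) / n = 2 * Real.pi - 2 * Real.pi * ((n:ℝ) - m) / n := by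
        field_simp; ring
      rw [heq, Real.cos_two_pi_sub]
    rw [key]
    apply Real.cos_le_cos_of_nonneg_of_le_pi
    · positivity
    · rw [div_le_iff₀ hn0]; nlinarith
    · rw [div_le_div_iff₀ hn0 hn0]
      nlinarith [mul_nonneg (mul_nonneg (by linarith : (0:ℝ) ≤ 2 * Real.pi)
        (by linarith : (0:ℝ) ≤ ((n:ℝ) - m) - 1)) hn0.le]

lemma re_eps_le (hn : 2 ≤ n) {k : ZMod n} (hk : k ≠ 0) :
    (eps n k).re ≤ Real.cos (2 * Real.pi / n) := by
  have h0 : 0 < k.val := by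
    rcases Nat.eq_zero_or_pos k.val with h | h
    · exact absurd (by rwa [ZMod.val_eq_zero] at h) hk
    · exact h
  rw [eps, om_pow, Complex.exp_ofReal_mul_I_re]
  exact cos_mono_bound n hn h0 (ZMod.val_lt k)



variable {H : Type} [NormedAddCommGroup H] [InnerProductSpace ℂ H]
variable (π : DihedralGroup n →* (H ≃ₗᵢ[ℂ] H)) (ξ : H)

local notation "⟪" x ", " y "⟫" => @inner ℂ _ _ x y

lemma pi_mul (g h : DihedralGroup n) (x : H) : π (g * h) x = π g (π h x) := by
  rw [map_mul]; rfl

/-- Fourier component of `ξ`. -/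
noncomputable def comp (k : ZMod n) : H :=
  (n : ℂ)⁻¹ • ∑ j : ZMod n, eps n (-(k * j)) • π (r j) ξ

lemma r_apply_comp (k i : ZMod n) :
    π (r i) (comp n π ξ k) = eps n (k * i) • comp n π ξ k := by
  unfold comp
  rw [map_smul, map_sum]
  have step : ∀ j : ZMod n, π (r i) (eps n (-(k * j)) • π (r j) ξ)
      = eps n (-(k * j)) • π (r (i + j)) ξ := by
    intro j
    rw [map_smul, ← pi_mul, r_mul_r]
  simp_rw [step]
  have reidx : ∑ j : ZMod n, eps n (-(k * j)) • π (r (i + j)) ξ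
      = ∑ j : ZMod n, (eps n (k * i) * eps n (-(k * j))) • π (r j) ξ := by
    refine Fintype.sum_equiv (Equiv.addLeft i) _ _ (fun j => ?_)
    have h1 : (Equiv.addLeft i) j = i + j := rfl
    rw [h1]
    congr 1
    have h2 : k * i + -(k * (i + j)) = -(k * j) := by ring
    rw [← eps_add, h2]
  rw [reidx]
  simp_rw [← smul_smul]
  rw [← Finset.smul_sum, smul_comm]

lemma sum_comp : ∑ k : ZMod n, comp n π ξ k = ξ := by
  unfold comp
  rw [← Finset.smul_sum, Finset.sum_comm]
  have step : ∀ j : ZMod n, ∑ k : ZMod n, eps n (-(k * j)) • π (r j) ξ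
      = (if j = 0 then (n:ℂ) else 0) • π (r j) ξ := by
    intro j
    rw [← Finset.sum_smul]
    congr 1
    have h2 : ∑ k : ZMod n, eps n (-(k * j)) = ∑ k : ZMod n, eps n (k * (-j)) :=
      Finset.sum_congr rfl (fun k _ => by congr 1; ring)
    rw [h2, sum_eps n (-j)]
    simp [neg_eq_zero]
  simp_rw [step]
  have step2 : ∀ j : ZMod n, (if j = 0 then (n:ℂ) else 0) • π (r j) ξ
      = if j = 0 then (n:ℂ) • π (r j) ξ else 0 := fun j => by rw [ite_smul, zero_smul]
  simp_rw [step2, Finset.sum_ite_eq' Finset.univ (0 : ZMod n), if_pos (Finset.mem_univ _)]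
  have : π (r (0 : ZMod n)) ξ = ξ := by rw [← one_def, map_one]; rfl
  rw [this, smul_smul, inv_mul_cancel₀ (Nat.cast_ne_zero.mpr (NeZero.ne n)), one_smul]

lemma comp_inner_eq_zero {k l : ZMod n} (hkl : k ≠ l) :
    ⟪comp n π ξ k, comp n π ξ l⟫ = 0 := by
  have h := (π (r 1)).inner_map_map (comp n π ξ k) (comp n π ξ l)
  rw [r_apply_comp, r_apply_comp, inner_smul_left, inner_smul_right, conj_eps,
    mul_one, mul_one] at h
  have h2 : (eps n (-k) * eps n l - 1) * ⟪comp n π ξ k, comp n π ξ l⟫ = 0 := by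
    rw [sub_mul, one_mul, mul_assoc]
    rw [h]; ring
  rcases mul_eq_zero.mp h2 with h3 | h3
  · exfalso
    have h4 : eps n (-k) * eps n l = eps n (l - k) := by
      rw [← eps_add]; congr 1; ring
    rw [h4] at h3
    exact eps_ne_one n (sub_ne_zero.mpr (Ne.symm hkl)) (by linear_combination h3)
  · exact h3


lemma r_apply_comp_zero (i : ZMod n) : π (r i) (comp n π ξ 0) = comp n π ξ 0 := by
  rw [r_apply_comp, zero_mul, eps_zero, one_smul]

lemma sr_apply_comp_zero (i : ZMod n) :
    π (sr i) (comp n π ξ 0) = π (sr 0) (comp n π ξ 0) := by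
  have h : (sr i : DihedralGroup n) = sr 0 * r i := by rw [sr_mul_r, zero_add]
  rw [h, pi_mul, r_apply_comp_zero]

lemma A_comp_zero (hinv : ∀ η : H, (∀ g : DihedralGroup n, π g η = η) → η = 0) :
    π (sr 0) (comp n π ξ 0) = - comp n π ξ 0 := by
  set c0 := comp n π ξ 0 with hc0
  set η := c0 + π (sr 0) c0 with hη
  have hinvη : ∀ g : DihedralGroup n, π g η = η := by
    intro g
    have hAA : ∀ x : H, π (sr 0) (π (sr 0) x) = x := by
      intro x
      rw [← pi_mul, sr_mul_self, map_one]; rfl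
    cases g with
    | r i =>
        have h1 : π (r i) c0 = c0 := r_apply_comp_zero n π ξ i
        have h2 : π (r i) (π (sr 0) c0) = π (sr 0) c0 := by
          rw [← pi_mul, r_mul_sr, zero_sub, sr_apply_comp_zero]
        rw [hη, map_add, h1, h2]
    | sr i =>
        have h3 : π (sr i) η = π (sr 0) η := by
          have h : (sr i : DihedralGroup n) = sr 0 * r i := by rw [sr_mul_r, zero_add]
          have h4 : π (r i) η = η := by
            have h1 : π (r i) c0 = c0 := r_apply_comp_zero n π ξ i
            have h2 : π (r i) (π (sr 0) c0) = π (sr 0) c0 := by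
              rw [← pi_mul, r_mul_sr, zero_sub, sr_apply_comp_zero]
            rw [hη, map_add, h1, h2]
          rw [h, pi_mul, h4]
        rw [h3, hη, map_add, hAA, add_comm]
  have := hinv η hinvη
  rw [hη] at this
  linear_combination (norm := module) this

lemma B_comp_zero (hinv : ∀ η : H, (∀ g : DihedralGroup n, π g η = η) → η = 0) :
    π (sr 1) (comp n π ξ 0) = - comp n π ξ 0 := by
  rw [sr_apply_comp_zero, A_comp_zero n π ξ hinv]


lemma key_lower (hn : 3 ≤ n)
    (hinv : ∀ η : H, (∀ g : DihedralGroup n, π g η = η) → η = 0)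
    (hξ : ‖ξ‖ = 1) :
    4 - 4 * Real.cos (Real.pi / n) ≤
      ‖π (sr 0) ξ - ξ‖ ^ 2 + ‖π (sr 1) ξ - ξ‖ ^ 2 := by
  classical
  have hn2 : 2 ≤ n := by omega
  set c0 := comp n π ξ 0 with hc0def
  set T : Finset (ZMod n) := Finset.univ.erase 0 with hT
  set ξ' : H := ∑ k ∈ T, comp n π ξ k with hxi'
  have hsplit : ξ = c0 + ξ' := by
    have hsum := sum_comp n π ξ
    rw [← Finset.add_sum_erase Finset.univ _ (Finset.mem_univ (0 : ZMod n))] at hsum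
    exact hsum.symm
  have horth : ∀ {k l : ZMod n}, k ≠ l → ⟪comp n π ξ k, comp n π ξ l⟫ = 0 :=
    fun hkl => comp_inner_eq_zero n π ξ hkl
  have h0xi' : ⟪c0, ξ'⟫ = 0 := by
    rw [hxi', inner_sum]
    exact Finset.sum_eq_zero fun k hk => horth (Ne.symm (Finset.ne_of_mem_erase hk))
  have hxi'0 : ⟪ξ', c0⟫ = 0 := by
    rw [hxi', sum_inner]
    exact Finset.sum_eq_zero fun k hk => horth (Finset.ne_of_mem_erase hk)
  -- norms
  have hnormxi' : ‖ξ'‖ ^ 2 = ∑ k ∈ T, ‖comp n π ξ k‖ ^ 2 := by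
    have h1 : ⟪ξ', ξ'⟫ = ∑ k ∈ T, ⟪comp n π ξ k, comp n π ξ k⟫ := by
      rw [hxi', sum_inner]
      refine Finset.sum_congr rfl fun k hk => ?_
      rw [inner_sum]
      rw [Finset.sum_eq_single k (fun l hl hlk => horth (Ne.symm hlk)) (fun h => absurd hk h)]
    have h2 := congrArg Complex.re h1
    rw [Complex.re_sum] at h2
    have h3 : (⟪ξ', ξ'⟫).re = ‖ξ'‖ ^ 2 := inner_self_eq_norm_sq (𝕜 := ℂ) ξ'
    have h4 : ∀ k : ZMod n, (⟪comp n π ξ k, comp n π ξ k⟫).re = ‖comp n π ξ k‖ ^ 2 :=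
      fun k => inner_self_eq_norm_sq (𝕜 := ℂ) _
    rw [h3] at h2
    rw [h2]
    exact Finset.sum_congr rfl fun k _ => h4 k
  have hnormsum : ‖c0‖ ^ 2 + ‖ξ'‖ ^ 2 = 1 := by
    have h := norm_add_sq (𝕜 := ℂ) c0 ξ'
    rw [h0xi'] at h
    rw [← hsplit, hξ] at h
    simp at h
    linarith
  -- involution facts
  have hA2 : ∀ x : H, π (sr 0) (π (sr 0) x) = x := fun x => by
    rw [← pi_mul, sr_mul_self, map_one]; rfl
  have hB2 : ∀ x : H, π (sr 1) (π (sr 1) x) = x := fun x => by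
    rw [← pi_mul, sr_mul_self, map_one]; rfl
  have hAc0 : π (sr 0) c0 = -c0 := A_comp_zero n π ξ hinv
  have hBc0 : π (sr 1) c0 = -c0 := B_comp_zero n π ξ hinv
  have hBAU : ∀ x : H, π (sr 1) x = π (sr 0) (π (r 1) x) := fun x => by
    rw [← pi_mul, sr_mul_r, zero_add]
  have hAsa : ∀ x y : H, ⟪π (sr 0) x, y⟫ = ⟪x, π (sr 0) y⟫ := by
    intro x y
    conv_lhs => rw [← (π (sr 0)).inner_map_map (π (sr 0) x) y]
    rw [hA2]
  have hBsa : ∀ x y : H, ⟪π (sr 1) x, y⟫ = ⟪x, π (sr 1) y⟫ := by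
    intro x y
    conv_lhs => rw [← (π (sr 1)).inner_map_map (π (sr 1) x) y]
    rw [hB2]
  -- cross terms
  have hReA : (⟪π (sr 0) ξ, ξ⟫).re = -‖c0‖ ^ 2 + (⟪π (sr 0) ξ', ξ'⟫).re := by
    have hAx : π (sr 0) ξ = -c0 + π (sr 0) ξ' := by
      rw [hsplit, map_add, hAc0]
    have hcross : ⟪π (sr 0) ξ', c0⟫ = 0 := by
      rw [hAsa, hAc0, inner_neg_right, hxi'0, neg_zero]
    rw [hAx, hsplit]
    rw [inner_add_left, inner_add_right, inner_add_right, inner_neg_left, inner_neg_left,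
      h0xi', hcross]
    have : ⟪c0, c0⟫ = ((‖c0‖ : ℂ)) ^ 2 := inner_self_eq_norm_sq_to_K c0
    rw [this]
    simp [Complex.add_re]
    norm_cast
  have hReB : (⟪π (sr 1) ξ, ξ⟫).re = -‖c0‖ ^ 2 + (⟪π (sr 1) ξ', ξ'⟫).re := by
    have hBx : π (sr 1) ξ = -c0 + π (sr 1) ξ' := by
      rw [hsplit, map_add, hBc0]
    have hcross : ⟪π (sr 1) ξ', c0⟫ = 0 := by
      rw [hBsa, hBc0, inner_neg_right, hxi'0, neg_zero]
    rw [hBx, hsplit]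
    rw [inner_add_left, inner_add_right, inner_add_right, inner_neg_left, inner_neg_left,
      h0xi', hcross]
    have : ⟪c0, c0⟫ = ((‖c0‖ : ℂ)) ^ 2 := inner_self_eq_norm_sq_to_K c0
    rw [this]
    simp [Complex.add_re]
    norm_cast
  -- the U-pairing bound
  set cN := Real.cos (2 * Real.pi / n) with hcN
  have hUxi' : π (r 1) ξ' = ∑ k ∈ T, eps n k • comp n π ξ k := by
    rw [hxi', map_sum]
    exact Finset.sum_congr rfl fun k _ => by rw [r_apply_comp, mul_one]
  have hpairs : ⟪ξ', π (r 1) ξ'⟫ = ∑ k ∈ T, eps n k * ⟪comp n π ξ k, comp n π ξ k⟫ := by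
    rw [hUxi', hxi', sum_inner]
    refine Finset.sum_congr rfl fun k hk => ?_
    rw [inner_sum]
    simp_rw [inner_smul_right]
    rw [Finset.sum_eq_single k
      (fun l hl hlk => by rw [horth (Ne.symm hlk), mul_zero])
      (fun h => absurd hk h)]
  have hre_pairs : (⟪ξ', π (r 1) ξ'⟫).re ≤ cN * ‖ξ'‖ ^ 2 := by
    rw [hpairs, Complex.re_sum, hnormxi', Finset.mul_sum]
    refine Finset.sum_le_sum fun k hk => ?_
    have hk0 : k ≠ 0 := Finset.ne_of_mem_erase hk
    have h1 : ⟪comp n π ξ k, comp n π ξ k⟫ = ((‖comp n π ξ k‖ ^ 2 : ℝ) : ℂ) := by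
      rw [inner_self_eq_norm_sq_to_K]; norm_cast
    rw [h1]
    have h2 : (eps n k * ((‖comp n π ξ k‖ ^ 2 : ℝ) : ℂ)).re
        = (eps n k).re * ‖comp n π ξ k‖ ^ 2 := by
      simp [Complex.mul_re, ← Complex.ofReal_pow]
    rw [h2]
    exact mul_le_mul_of_nonneg_right (re_eps_le n hn2 hk0) (sq_nonneg _)
  -- norm of A ξ' + B ξ'
  have hcross2 : ⟪π (sr 0) ξ', π (sr 1) ξ'⟫ = ⟪ξ', π (r 1) ξ'⟫ := by
    rw [hBAU ξ', (π (sr 0)).inner_map_map]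
  have hABnorm : ‖π (sr 0) ξ' + π (sr 1) ξ'‖ ^ 2 ≤ (2 + 2 * cN) * ‖ξ'‖ ^ 2 := by
    rw [norm_add_sq (𝕜 := ℂ), hcross2]
    rw [(π (sr 0)).norm_map, (π (sr 1)).norm_map]
    have : RCLike.re ⟪ξ', π (r 1) ξ'⟫ = (⟪ξ', π (r 1) ξ'⟫).re := rfl
    rw [this]
    nlinarith [hre_pairs]
  set cH := Real.cos (Real.pi / n) with hcH
  have hπpos := Real.pi_pos
  have hn0 : (0:ℝ) < n := by positivity
  have hcH0 : 0 ≤ cH := by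
    apply Real.cos_nonneg_of_mem_Icc
    constructor
    · nlinarith [div_nonneg hπpos.le hn0.le]
    · rw [div_le_div_iff₀ hn0 (by norm_num : (0:ℝ) < 2)]
      have hn2' : (2:ℝ) ≤ n := by exact_mod_cast hn2
      nlinarith [mul_nonneg hπpos.le (by linarith : (0:ℝ) ≤ (n:ℝ) - 2)]
  have hdouble : 2 + 2 * cN = (2 * cH) ^ 2 := by
    rw [hcH, hcN]
    have h := Real.cos_sq (Real.pi / n)
    have h2x : 2 * (Real.pi / n) = 2 * Real.pi / n := by ring
    rw [h2x] at h
    ring_nf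
    ring_nf at h
    linarith [h]
  have hABnorm' : ‖π (sr 0) ξ' + π (sr 1) ξ'‖ ≤ 2 * cH * ‖ξ'‖ := by
    have h1 : ‖π (sr 0) ξ' + π (sr 1) ξ'‖ ^ 2 ≤ (2 * cH * ‖ξ'‖) ^ 2 := by
      rw [mul_pow, ← hdouble]
      exact hABnorm
    have h2 : (0:ℝ) ≤ 2 * cH * ‖ξ'‖ := by positivity
    have h3 := Real.sqrt_le_sqrt h1
    rwa [Real.sqrt_sq (norm_nonneg _), Real.sqrt_sq h2] at h3
  have hS : (⟪π (sr 0) ξ', ξ'⟫).re + (⟪π (sr 1) ξ', ξ'⟫).re ≤ 2 * cH * ‖ξ'‖ ^ 2 := by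
    have h1 := re_inner_le_norm (𝕜 := ℂ) (π (sr 0) ξ' + π (sr 1) ξ') ξ'
    rw [inner_add_left] at h1
    have h2 : RCLike.re (⟪π (sr 0) ξ', ξ'⟫ + ⟪π (sr 1) ξ', ξ'⟫)
        = (⟪π (sr 0) ξ', ξ'⟫).re + (⟪π (sr 1) ξ', ξ'⟫).re := rfl
    rw [h2] at h1
    have h3 : ‖π (sr 0) ξ' + π (sr 1) ξ'‖ * ‖ξ'‖ ≤ 2 * cH * ‖ξ'‖ * ‖ξ'‖ :=
      mul_le_mul_of_nonneg_right hABnorm' (norm_nonneg _)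
    nlinarith
  have hReTotal : (⟪π (sr 0) ξ, ξ⟫).re + (⟪π (sr 1) ξ, ξ⟫).re ≤ 2 * cH := by
    rw [hReA, hReB]
    nlinarith [hS, hnormsum, hcH0, sq_nonneg ‖c0‖]
  have hnormA : ‖π (sr 0) ξ - ξ‖ ^ 2 = 2 - 2 * (⟪π (sr 0) ξ, ξ⟫).re := by
    rw [norm_sub_sq (𝕜 := ℂ), (π (sr 0)).norm_map, hξ]
    have : RCLike.re ⟪π (sr 0) ξ, ξ⟫ = (⟪π (sr 0) ξ, ξ⟫).re := rfl
    rw [this]; ring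
  have hnormB : ‖π (sr 1) ξ - ξ‖ ^ 2 = 2 - 2 * (⟪π (sr 1) ξ, ξ⟫).re := by
    rw [norm_sub_sq (𝕜 := ℂ), (π (sr 1)).norm_map, hξ]
    have : RCLike.re ⟪π (sr 1) ξ, ξ⟫ = (⟪π (sr 1) ξ, ξ⟫).re := rfl
    rw [this]; ring
  rw [hnormA, hnormB]
  linarith

lemma eps_abs (j : ZMod n) : ‖eps n j‖ = 1 := by
  rw [eps, norm_pow, om, Complex.norm_exp_ofReal_mul_I, one_pow]

abbrev H2 : Type := EuclideanSpace ℂ (Fin 2)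

/-- The standard 2-dimensional unitary representation of the dihedral group. -/
noncomputable def act : DihedralGroup n → H2 → H2
  | r j => fun v => WithLp.toLp 2 ![eps n j * v 0, eps n (-j) * v 1]
  | sr j => fun v => WithLp.toLp 2 ![eps n (-j) * v 1, eps n j * v 0]

lemma act_r_apply (j : ZMod n) (v : H2) :
    act n (r j) v 0 = eps n j * v 0 ∧ act n (r j) v 1 = eps n (-j) * v 1 :=
  ⟨rfl, rfl⟩

lemma act_mul (g h : DihedralGroup n) (v : H2) :
    act n (g * h) v = act n g (act n h v) := by
  have key : ∀ (i j : ZMod n), eps n (i + j) = eps n i * eps n j := eps_add n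
  have ksub : ∀ (a b : ZMod n), eps n (a - b) = eps n a * eps n (-b) := fun a b => by
    rw [sub_eq_add_neg, key]
  cases g with
  | r i => cases h with
    | r j =>
        rw [r_mul_r]
        ext x; fin_cases x <;>
          simp only [act, Fin.mk_zero, Fin.mk_one, Fin.isValue, Matrix.cons_val_zero, Matrix.cons_val_one, Matrix.head_cons] <;>
          first
            | (rw [key]; ring)
            | (rw [ksub]; ring)
            | (rw [neg_add]; rw [key]; ring)
            | (rw [neg_sub, ksub]; ring)
            | (rw [show -(i + j) = -i + -j by ring, key]; ring)
    | sr j =>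
        rw [r_mul_sr]
        ext x; fin_cases x <;>
          simp only [act, Fin.mk_zero, Fin.mk_one, Fin.isValue, Matrix.cons_val_zero, Matrix.cons_val_one, Matrix.head_cons] <;>
          first
            | (rw [key]; ring)
            | (rw [ksub]; ring)
            | (rw [show -(j - i) = i + -j by ring, key]; ring)
            | (rw [show j - i = -i + j by ring, key]; ring)
  | sr i => cases h with
    | r j =>
        rw [sr_mul_r]
        ext x; fin_cases x <;>
          simp only [act, Fin.mk_zero, Fin.mk_one, Fin.isValue, Matrix.cons_val_zero, Matrix.cons_val_one, Matrix.head_cons] <;>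
          first
            | (rw [key]; ring)
            | (rw [ksub]; ring)
            | (rw [show -(i + j) = -i + -j by ring, key]; ring)
    | sr j =>
        rw [sr_mul_sr]
        ext x; fin_cases x <;>
          simp only [act, Fin.mk_zero, Fin.mk_one, Fin.isValue, Matrix.cons_val_zero, Matrix.cons_val_one, Matrix.head_cons] <;>
          first
            | (rw [key]; ring)
            | (rw [ksub]; ring)
            | (rw [show j - i = -i + j by ring, key]; ring)
            | (rw [show i - j = i + -j by ring, key]; ring)
            | (rw [show -(j - i) = i + -j by ring, key]; ring)

lemma act_one (v : H2) : act n 1 v = v := by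
  rw [one_def]
  ext x; fin_cases x <;>
    simp [act, eps_zero, neg_zero, Matrix.cons_val_zero, Matrix.cons_val_one, Matrix.head_cons]

lemma act_norm (g : DihedralGroup n) (v : H2) : ‖act n g v‖ = ‖v‖ := by
  have habs : ∀ (j : ZMod n) (z : ℂ), ‖eps n j * z‖ = ‖z‖ := by
    intro j z
    rw [norm_mul, eps_abs, one_mul]
  cases g with
  | r j =>
      rw [EuclideanSpace.norm_eq, EuclideanSpace.norm_eq]
      congr 1
      rw [Fin.sum_univ_two, Fin.sum_univ_two]
      simp only [act, Matrix.cons_val_zero, Matrix.cons_val_one, Matrix.head_cons, habs]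
  | sr j =>
      rw [EuclideanSpace.norm_eq, EuclideanSpace.norm_eq]
      congr 1
      rw [Fin.sum_univ_two, Fin.sum_univ_two]
      simp only [act, Matrix.cons_val_zero, Matrix.cons_val_one, Matrix.head_cons, habs]
      ring

lemma act_add (g : DihedralGroup n) (v w : H2) :
    act n g (v + w) = act n g v + act n g w := by
  cases g <;>
    · ext x; fin_cases x <;>
        simp [act, Matrix.cons_val_zero, Matrix.cons_val_one, Matrix.head_cons,
          PiLp.add_apply] <;> ring

lemma act_smul (g : DihedralGroup n) (c : ℂ) (v : H2) :
    act n g (c • v) = c • act n g v := by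
  cases g <;>
    · ext x; fin_cases x <;>
        simp [act, Matrix.cons_val_zero, Matrix.cons_val_one, Matrix.head_cons,
          PiLp.smul_apply, smul_eq_mul] <;> ring

/-- The 2-dim representation as a monoid hom into linear isometry equivalences. -/
noncomputable def rho : DihedralGroup n →* (H2 ≃ₗᵢ[ℂ] H2) where
  toFun g :=
    { toFun := act n g
      invFun := act n g⁻¹
      map_add' := act_add n g
      map_smul' := act_smul n g
      left_inv := fun v => by
        show act n g⁻¹ (act n g v) = v
        rw [← act_mul, inv_mul_cancel, act_one]
      right_inv := fun v => by
        show act n g (act n g⁻¹ v) = v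
        rw [← act_mul, mul_inv_cancel, act_one]
      norm_map' := act_norm n g }
  map_one' := by
    apply LinearIsometryEquiv.ext
    intro v
    exact act_one n v
  map_mul' g h := by
    apply LinearIsometryEquiv.ext
    intro v
    exact act_mul n g h v

lemma rho_apply (g : DihedralGroup n) (v : H2) : rho n g v = act n g v := rfl

lemma rho_no_invariant (hn : 3 ≤ n) (v : H2) (hv : ∀ g : DihedralGroup n, rho n g v = v) :
    v = 0 := by
  have h1 := congrFun (congrArg WithLp.ofLp (hv (r 1))) 0
  have h2 := congrFun (congrArg WithLp.ofLp (hv (r 1))) 1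
  rw [rho_apply] at h1 h2
  simp only [act, Fin.mk_zero, Fin.mk_one, Fin.isValue, Matrix.cons_val_zero, Matrix.cons_val_one, Matrix.head_cons] at h1 h2
  have hne : (1 : ZMod n) ≠ 0 := by
    haveI : Fact (1 < n) := ⟨by omega⟩
    exact one_ne_zero
  have hv0 : v 0 = 0 := by
    have hz : (eps n 1 - 1) * v 0 = 0 := by linear_combination h1
    rcases mul_eq_zero.mp hz with h | h
    · exact absurd (by linear_combination h) (eps_ne_one n hne)
    · exact h
  have hv1 : v 1 = 0 := by
    have hz : (eps n (-(1 : ZMod n)) - 1) * v 1 = 0 := by linear_combination h2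
    rcases mul_eq_zero.mp hz with h | h
    · exact absurd (by linear_combination h) (eps_ne_one n (neg_ne_zero.mpr hne))
    · exact h
  ext x; fin_cases x
  · exact hv0
  · exact hv1


-- helpers
lemma exp_mul_exp (a b : ℝ) :
    Complex.exp (↑a * I) * Complex.exp (↑b * I) = Complex.exp (↑(a + b) * I) := by
  rw [← Complex.exp_add]; congr 1; push_cast; ring

lemma conj_exp_I (a : ℝ) :
    (starRingEnd ℂ) (Complex.exp (↑a * I)) = Complex.exp (↑(-a) * I) := by
  rw [← Complex.exp_conj, map_mul, Complex.conj_ofReal, Complex.conj_I]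
  congr 1; push_cast; ring

lemma norm_exp_sub_exp (a b : ℝ) :
    ‖Complex.exp (↑a * I) - Complex.exp (↑b * I)‖ ^ 2 = 2 - 2 * Real.cos (a - b) := by
  have hre : ∀ x : ℝ, (Complex.exp (↑x * I)).re = Real.cos x := Complex.exp_ofReal_mul_I_re
  have him : ∀ x : ℝ, (Complex.exp (↑x * I)).im = Real.sin x := Complex.exp_ofReal_mul_I_im
  rw [← Complex.normSq_eq_norm_sq, Complex.normSq_apply]
  rw [Complex.sub_re, Complex.sub_im, hre, hre, him, him, Real.cos_sub]
  nlinarith [Real.sin_sq_add_cos_sq a, Real.sin_sq_add_cos_sq b]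

section xi
variable (hn : 3 ≤ n)

noncomputable def th : ℝ := Real.pi / (2 * n)
noncomputable def cc : ℂ := ((Real.sqrt 2)⁻¹ : ℝ)

noncomputable def xi0 : H2 :=
  WithLp.toLp 2 ![cc * Complex.exp (↑(-(th n)) * I), cc * Complex.exp (↑(th n) * I)]

lemma xi0_0 : xi0 n 0 = cc * Complex.exp (↑(-(th n)) * I) := rfl
lemma xi0_1 : xi0 n 1 = cc * Complex.exp (↑(th n) * I) := rfl

lemma norm_cc_mul_sq (z : ℂ) : ‖cc * z‖ ^ 2 = 1 / 2 * ‖z‖ ^ 2 := by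
  rw [norm_mul, mul_pow]
  have h2 : ‖cc‖ ^ 2 = 1 / 2 := by
    rw [cc, Complex.norm_real, Real.norm_eq_abs, _root_.sq_abs]
    rw [← Real.sqrt_inv]
    rw [Real.sq_sqrt (by norm_num : (0:ℝ) ≤ 2⁻¹)]
    norm_num
  rw [h2]

lemma norm_xi0 : ‖xi0 n‖ = 1 := by
  rw [EuclideanSpace.norm_eq, Fin.sum_univ_two, xi0_0, xi0_1]
  have h1 : ∀ a : ℝ, ‖cc * Complex.exp (↑a * I)‖ ^ 2 = 1 / 2 := by
    intro a
    rw [norm_cc_mul_sq]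
    have : ‖Complex.exp (↑a * I)‖ = 1 := by
      rw [Complex.norm_exp_ofReal_mul_I]
    rw [this]; norm_num
  rw [h1, h1]
  norm_num

lemma th_nonneg : 0 ≤ th n := by
  have := Real.pi_pos
  have hn0 : (0:ℝ) < n := by
    have : 0 < n := Nat.pos_of_ne_zero (NeZero.ne n)
    exact_mod_cast this
  rw [th]; positivity

lemma th_le_pi (hn : 3 ≤ n) : th n ≤ Real.pi := by
  have hπ := Real.pi_pos
  have hn0 : (1:ℝ) ≤ 2 * n := by
    have : 1 ≤ n := by omega
    have : (1:ℝ) ≤ n := by exact_mod_cast this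
    linarith
  rw [th]
  rw [div_le_iff₀ (by linarith : (0:ℝ) < 2 * n)]
  nlinarith

lemma sin_th_nonneg (hn : 3 ≤ n) : 0 ≤ Real.sin (th n) :=
  Real.sin_nonneg_of_nonneg_of_le_pi (th_nonneg n) (th_le_pi n hn)

lemma sqrt_target (hn : 3 ≤ n) {x : ℝ} (hx : x = 4 * Real.sin (th n) ^ 2) :
    Real.sqrt x = 2 * Real.sin (th n) := by
  rw [hx, show 4 * Real.sin (th n) ^ 2 = (2 * Real.sin (th n)) ^ 2 by ring,
    Real.sqrt_sq (by nlinarith [sin_th_nonneg n hn])]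

lemma two_sub_cos (a : ℝ) : 2 - 2 * Real.cos (2 * a) = 4 * Real.sin a ^ 2 := by
  rw [Real.cos_two_mul]
  nlinarith [Real.sin_sq_add_cos_sq a]

/-- norm of `rho (sr 0) ξ₀ - ξ₀`. -/
lemma normA (hn : 3 ≤ n) : ‖rho n (sr 0) (xi0 n) - xi0 n‖ = 2 * Real.sin (th n) := by
  have h0 : (rho n (sr 0) (xi0 n) - xi0 n) 0
      = cc * (Complex.exp (↑(th n) * I) - Complex.exp (↑(-(th n)) * I)) := by
    rw [PiLp.sub_apply, rho_apply]
    show eps n (-0) * (xi0 n 1) - xi0 n 0 = _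
    rw [neg_zero, eps_zero, one_mul, xi0_0, xi0_1]
    ring
  have h1 : (rho n (sr 0) (xi0 n) - xi0 n) 1
      = cc * (Complex.exp (↑(-(th n)) * I) - Complex.exp (↑(th n) * I)) := by
    rw [PiLp.sub_apply, rho_apply]
    show eps n 0 * (xi0 n 0) - xi0 n 1 = _
    rw [eps_zero, one_mul, xi0_0, xi0_1]
    ring
  rw [EuclideanSpace.norm_eq, Fin.sum_univ_two, h0, h1]
  rw [norm_cc_mul_sq, norm_cc_mul_sq, norm_exp_sub_exp, norm_exp_sub_exp]
  apply sqrt_target n hn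
  have e1 : th n - -(th n) = 2 * th n := by ring
  have e2 : -(th n) - th n = -(2 * th n) := by ring
  rw [e1, e2, Real.cos_neg]
  have := two_sub_cos (th n)
  linarith


lemma eps_one_exp (hn : 3 ≤ n) : eps n 1 = Complex.exp (↑(4 * th n) * I) := by
  haveI : Fact (1 < n) := ⟨by omega⟩
  rw [eps, ZMod.val_one, pow_one, om]
  have harg : (2 * Real.pi / n : ℝ) = 4 * th n := by
    rw [th]
    have hn0 : (n:ℝ) ≠ 0 := Nat.cast_ne_zero.mpr (by omega)
    field_simp
    ring
  rw [harg]

lemma eps_neg_one_exp (hn : 3 ≤ n) : eps n (-1) = Complex.exp (↑(-(4 * th n)) * I) := by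
  rw [← conj_eps, eps_one_exp n hn, conj_exp_I]

lemma normB (hn : 3 ≤ n) : ‖rho n (sr 1) (xi0 n) - xi0 n‖ = 2 * Real.sin (th n) := by
  have h0 : (rho n (sr 1) (xi0 n) - xi0 n) 0
      = cc * (Complex.exp (↑(-(4 * th n) + th n) * I) - Complex.exp (↑(-(th n)) * I)) := by
    rw [PiLp.sub_apply, rho_apply]
    show eps n (-(1 : ZMod n)) * (xi0 n 1) - xi0 n 0 = _
    rw [eps_neg_one_exp n hn, xi0_0, xi0_1, ← exp_mul_exp]
    ring
  have h1 : (rho n (sr 1) (xi0 n) - xi0 n) 1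
      = cc * (Complex.exp (↑(4 * th n + -(th n)) * I) - Complex.exp (↑(th n) * I)) := by
    rw [PiLp.sub_apply, rho_apply]
    show eps n (1 : ZMod n) * (xi0 n 0) - xi0 n 1 = _
    rw [eps_one_exp n hn, xi0_0, xi0_1, ← exp_mul_exp]
    ring
  rw [EuclideanSpace.norm_eq, Fin.sum_univ_two, h0, h1,
    norm_cc_mul_sq, norm_cc_mul_sq, norm_exp_sub_exp, norm_exp_sub_exp]
  apply sqrt_target n hn
  have e1 : -(4 * th n) + th n - -(th n) = -(2 * th n) := by ring
  have e2 : 4 * th n + -(th n) - th n = 2 * th n := by ring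
  rw [e1, e2, Real.cos_neg]
  have := two_sub_cos (th n)
  linarith

end xi

lemma iSup_mem_pair {α : Type} [Fintype α] [Nonempty α] (f : α → ℝ)
    (hf : ∀ x, 0 ≤ f x) (a b : α) :
    (⨆ x ∈ ({a, b} : Set α), f x) = max (f a) (f b) := by
  classical
  have key : ∀ x : α, (⨆ _ : x ∈ ({a, b} : Set α), f x)
      = if x ∈ ({a, b} : Set α) then f x else 0 := by
    intro x
    by_cases h : x ∈ ({a, b} : Set α)
    · rw [if_pos h, ciSup_pos h]
    · rw [if_neg h]
      haveI : IsEmpty (x ∈ ({a, b} : Set α)) := ⟨h⟩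
      exact Real.iSup_of_isEmpty _
  have hbdd : BddAbove (Set.range fun x => ⨆ _ : x ∈ ({a, b} : Set α), f x) :=
    Set.Finite.bddAbove (Set.finite_range _)
  apply le_antisymm
  · apply ciSup_le
    intro x
    rw [key x]
    split_ifs with h
    · rcases h with h | h
      · rw [h]; exact le_max_left _ _
      · rw [Set.mem_singleton_iff.mp h]; exact le_max_right _ _
    · exact le_trans (hf a) (le_max_left _ _)
  · apply max_le
    · have ha := le_ciSup hbdd a
      rw [key a] at ha
      split_ifs at ha with h
      · exact ha
      · exact absurd (Set.mem_insert a {b}) h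
    · have hb := le_ciSup hbdd b
      rw [key b] at hb
      split_ifs at hb with h
      · exact hb
      · exact absurd (Set.mem_insert_of_mem a rfl) h


end KazhdanAux

open KazhdanAux in
/-- For the dihedral group `I₂(n)` of order `2n` (`n ≥ 3`) with its two
standard Coxeter generators `s, t`, the Kazhdan constant is
`κ(I₂(n), {s,t}) = 2 sin(π/(2n))`. -/
theorem kazhdan_dihedral (n : ℕ) (hn : 3 ≤ n) :
    kazhdanConstant (DihedralGroup n)
        {DihedralGroup.sr (0 : ZMod n), DihedralGroup.sr (1 : ZMod n)}
      = 2 * Real.sin (Real.pi / (2 * n)) := by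
  haveI : NeZero n := ⟨by omega⟩
  have hth : Real.pi / (2 * (n:ℝ)) = th n := rfl
  rw [kazhdanConstant, hth]
  have hmem : (2 * Real.sin (th n)) ∈
      {r : ℝ | ∃ (H : Type) (_ : NormedAddCommGroup H) (_ : InnerProductSpace ℂ H)
        (π : DihedralGroup n →* (H ≃ₗᵢ[ℂ] H)),
        (∀ ξ : H, (∀ g : DihedralGroup n, π g ξ = ξ) → ξ = 0) ∧
        ∃ ξ : H, ‖ξ‖ = 1 ∧ r = ⨆ s ∈ ({DihedralGroup.sr (0 : ZMod n),
          DihedralGroup.sr (1 : ZMod n)} : Set (DihedralGroup n)), ‖π s ξ - ξ‖} := by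
    refine ⟨H2, inferInstance, inferInstance, rho n,
      fun ξ hξ => rho_no_invariant n hn ξ hξ, xi0 n, norm_xi0 n, ?_⟩
    rw [iSup_mem_pair (fun x => ‖rho n x (xi0 n) - xi0 n‖)
      (fun x => norm_nonneg _) (sr 0) (sr 1)]
    rw [normA n hn, normB n hn, max_self]
  have hlb : ∀ r ∈ {r : ℝ | ∃ (H : Type) (_ : NormedAddCommGroup H)
      (_ : InnerProductSpace ℂ H) (π : DihedralGroup n →* (H ≃ₗᵢ[ℂ] H)),
      (∀ ξ : H, (∀ g : DihedralGroup n, π g ξ = ξ) → ξ = 0) ∧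
      ∃ ξ : H, ‖ξ‖ = 1 ∧ r = ⨆ s ∈ ({DihedralGroup.sr (0 : ZMod n),
        DihedralGroup.sr (1 : ZMod n)} : Set (DihedralGroup n)), ‖π s ξ - ξ‖},
      2 * Real.sin (th n) ≤ r := by
    rintro r ⟨H, _inst1, _inst2, π, hinv, ξ, hξnorm, hr⟩
    rw [hr, iSup_mem_pair (fun x => ‖π x ξ - ξ‖) (fun x => norm_nonneg _) (sr 0) (sr 1)]
    have hkey := key_lower n π ξ hn hinv hξnorm
    have hcos : Real.pi / (n:ℝ) = 2 * th n := by
      rw [th]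
      have hn0 : (n:ℝ) ≠ 0 := Nat.cast_ne_zero.mpr (by omega)
      field_simp
    rw [hcos] at hkey
    have h4 := two_sub_cos (th n)
    set A := ‖π (sr (0 : ZMod n)) ξ - ξ‖ with hA
    set B := ‖π (sr (1 : ZMod n)) ξ - ξ‖ with hB
    have hA0 : 0 ≤ A := norm_nonneg _
    have hB0 : 0 ≤ B := norm_nonneg _
    have hA2 : A ^ 2 ≤ (max A B) ^ 2 := pow_le_pow_left₀ hA0 (le_max_left A B) 2
    have hB2 : B ^ 2 ≤ (max A B) ^ 2 := pow_le_pow_left₀ hB0 (le_max_right A B) 2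
    have hM : (2 * Real.sin (th n)) ^ 2 ≤ (max A B) ^ 2 := by nlinarith
    have hM' := Real.sqrt_le_sqrt hM
    rwa [Real.sqrt_sq (by nlinarith [sin_th_nonneg n hn]),
      Real.sqrt_sq (le_trans hA0 (le_max_left A B))] at hM'
  exact le_antisymm (csInf_le ⟨2 * Real.sin (th n), fun r hr => hlb r hr⟩ hmem)
    (le_csInf ⟨_, hmem⟩ hlb)
end
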